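/- arXiv:0910.0264 — 2 statements merged into one kernel-verified Lean document; each statement's English description precedes it below -/
import Mathlib

section
/- If f is twice differentiable at t = 1 with f(1) = 0, f'(1) = 0, and f''(1) > 0, and P_n is a sequence of probability mass functions on a finite set converging pointwise to a fixed fully supported Q with P_n ≠ Q, then D_f(P_n‖Q) / D_2(P_n‖Q) → f''(1)/2 as n → ∞. -/
open Filter

lemma abs_sub_le_of_mem_segment' {x ξ : ℝ} (h : ξ ∈ segment ℝ 1 x) : |ξ - 1| ≤ |x - 1| := by
  obtain ⟨t, s, ht, hs, hts, rfl⟩ := h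
  have heq : t • (1:ℝ) + s • x - 1 = s * (x - 1) := by
    simp only [smul_eq_mul]; nlinarith
  rw [heq, abs_mul]
  calc |s| * |x-1| ≤ 1 * |x-1| := by
        apply mul_le_mul_of_nonneg_right _ (abs_nonneg _)
        rw [abs_of_nonneg hs]; linarith
    _ = |x-1| := one_mul _

lemma taylor_bound' (f f' : ℝ → ℝ) (c : ℝ) (hf1 : f 1 = 0)
    (hderiv : ∀ᶠ x in nhds (1:ℝ), HasDerivAt f (f' x) x)
    (hf'1 : f' 1 = 0) (hderiv2 : HasDerivAt f' c 1) :
    ∀ ε > 0, ∃ δ > 0, ∀ x : ℝ, |x - 1| < δ →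
      |f x - c/2*(x-1)^2| ≤ ε*(x-1)^2 := by
  intro ε hε
  have hlo := (hasDerivAt_iff_isLittleO.mp hderiv2).def hε
  have hcomb := hderiv.and hlo
  rw [Metric.eventually_nhds_iff] at hcomb
  obtain ⟨δ, hδ, hball⟩ := hcomb
  refine ⟨δ, hδ, fun x hx => ?_⟩
  set φ : ℝ → ℝ := fun y => f y - c/2*(y-1)^2 with hφ
  have key : ∀ ξ ∈ segment ℝ 1 x,
      HasDerivWithinAt φ (f' ξ - c*(ξ-1)) (segment ℝ 1 x) ξ ∧
      ‖f' ξ - c*(ξ-1)‖ ≤ ε * |x - 1| := by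
    intro ξ hξ
    have hξd : dist ξ 1 < δ := by
      rw [Real.dist_eq]
      exact lt_of_le_of_lt (abs_sub_le_of_mem_segment' hξ) hx
    obtain ⟨hd, hb⟩ := hball hξd
    constructor
    · have h2 : HasDerivAt (fun y : ℝ => c/2*(y-1)^2) (c*(ξ-1)) ξ := by
        have := (((hasDerivAt_id ξ).sub_const 1).pow 2).const_mul (c/2)
        refine HasDerivAt.congr_deriv this ?_
        simp; ring
      exact (hd.sub h2).hasDerivWithinAt
    · rw [hf'1] at hb
      have h1 : f' ξ - c*(ξ-1) = f' ξ - 0 - (ξ-1) • c := by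
        simp [smul_eq_mul]; ring
      rw [h1]
      refine le_trans hb ?_
      apply mul_le_mul_of_nonneg_left _ hε.le
      rw [Real.norm_eq_abs]
      exact abs_sub_le_of_mem_segment' hξ
  have hm := (convex_segment (1:ℝ) x).norm_image_sub_le_of_norm_hasDerivWithin_le
    (fun ξ hξ => (key ξ hξ).1) (fun ξ hξ => (key ξ hξ).2)
    (left_mem_segment ℝ 1 x) (right_mem_segment ℝ 1 x)
  have hφ1 : φ 1 = 0 := by simp [hφ, hf1]
  rw [hφ1, sub_zero] at hm
  calc |f x - c/2*(x-1)^2| = ‖φ x‖ := rfl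
    _ ≤ ε*|x-1| * ‖x-1‖ := hm
    _ = ε*(x-1)^2 := by
        rw [Real.norm_eq_abs, mul_assoc, abs_mul_abs_self]; ring

/-- If `f` is twice differentiable at `1` with `f 1 = 0`, `f' 1 = 0` and `f'' 1 = c > 0`,
and `P n` are probability mass functions on a finite set converging pointwise to a fixed
fully supported `Q` with `P n ≠ Q`, then `D_f(P n‖Q) / D_2(P n‖Q) → c / 2`. -/
theorem fDivergence_div_chiSq_tendsto {E : Type*} [Fintype E]
    (Q : E → ℝ) (hQpos : ∀ a, 0 < Q a) (hQsum : ∑ a, Q a = 1)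
    (P : ℕ → E → ℝ) (hPnonneg : ∀ n a, 0 ≤ P n a) (hPsum : ∀ n, ∑ a, P n a = 1)
    (hPne : ∀ n, P n ≠ Q)
    (hPtend : ∀ a, Tendsto (fun n => P n a) atTop (nhds (Q a)))
    (f f' : ℝ → ℝ) (c : ℝ)
    (hconv : ConvexOn ℝ (Set.Ioi (0 : ℝ)) f) (hf1 : f 1 = 0)
    (hderiv : ∀ᶠ x in nhds (1 : ℝ), HasDerivAt f (f' x) x)
    (hf'1 : f' 1 = 0) (hderiv2 : HasDerivAt f' c 1) (hc : 0 < c) :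
    Tendsto
      (fun n => (∑ a, Q a * f (P n a / Q a)) / (∑ a, (P n a - Q a) ^ 2 / Q a))
      atTop (nhds (c / 2)) := by
  have hQne : ∀ a, Q a ≠ 0 := fun a => (hQpos a).ne'
  set D2 : ℕ → ℝ := fun n => ∑ a, (P n a - Q a) ^ 2 / Q a with hD2
  set S : ℕ → ℝ := fun n => ∑ a, Q a * (f (P n a / Q a) - c/2*(P n a / Q a - 1)^2) with hS
  have hD2eq : ∀ n, D2 n = ∑ a, Q a * (P n a / Q a - 1)^2 := by
    intro n
    apply Finset.sum_congr rfl
    intro a _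
    have h := hQne a
    field_simp
    try ring
  have hD2pos : ∀ n, 0 < D2 n := by
    intro n
    obtain ⟨a, ha⟩ : ∃ a, P n a ≠ Q a := by
      by_contra h
      push_neg at h
      exact hPne n (funext h)
    apply Finset.sum_pos' (fun b _ => div_nonneg (sq_nonneg _) (hQpos b).le)
    refine ⟨a, Finset.mem_univ a, div_pos ?_ (hQpos a)⟩
    have : P n a - Q a ≠ 0 := sub_ne_zero.mpr ha
    positivity
  have hratio : ∀ n, (∑ a, Q a * f (P n a / Q a)) / D2 n = c/2 + S n / D2 n := by
    intro n
    have hd := (hD2pos n).ne'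
    have hnum : (∑ a, Q a * f (P n a / Q a)) = c/2 * D2 n + S n := by
      rw [hD2eq n, hS, Finset.mul_sum, ← Finset.sum_add_distrib]
      apply Finset.sum_congr rfl
      intro a _
      ring
    rw [hnum, add_div, mul_div_assoc, div_self hd, mul_one]
  have hStend : Tendsto (fun n => S n / D2 n) atTop (nhds 0) := by
    rw [Metric.tendsto_nhds]
    intro ε hε
    obtain ⟨δ, hδ, hδ'⟩ := taylor_bound' f f' c hf1 hderiv hf'1 hderiv2 (ε/2) (by linarith)
    have hev : ∀ᶠ n in atTop, ∀ a, |P n a / Q a - 1| < δ := by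
      rw [eventually_all]
      intro a
      have h1 : Tendsto (fun n => P n a / Q a) atTop (nhds (Q a / Q a)) :=
        (hPtend a).div_const _
      rw [div_self (hQne a)] at h1
      have h2 := Metric.tendsto_nhds.mp h1 δ hδ
      filter_upwards [h2] with n hn
      rwa [Real.dist_eq] at hn
    filter_upwards [hev] with n hn
    rw [Real.dist_eq, sub_zero, abs_div, abs_of_pos (hD2pos n)]
    have hSbound : |S n| ≤ ε/2 * D2 n := by
      rw [hD2eq n]
      calc |S n| ≤ ∑ a, |Q a * (f (P n a / Q a) - c/2*(P n a / Q a - 1)^2)| :=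
            Finset.abs_sum_le_sum_abs _ _
        _ ≤ ∑ a, Q a * (ε/2 * (P n a / Q a - 1)^2) := by
            apply Finset.sum_le_sum
            intro a _
            rw [abs_mul, abs_of_pos (hQpos a)]
            exact mul_le_mul_of_nonneg_left (hδ' _ (hn a)) (hQpos a).le
        _ = ε/2 * ∑ a, Q a * (P n a / Q a - 1)^2 := by
            rw [Finset.mul_sum]
            apply Finset.sum_congr rfl
            intro a _
            ring
    have : |S n| / D2 n ≤ ε/2 := (div_le_iff₀ (hD2pos n)).mpr hSbound
    linarith
  have hfin : Tendsto (fun n => c/2 + S n / D2 n) atTop (nhds (c/2 + 0)) :=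
    tendsto_const_nhds.add hStend
  rw [add_zero] at hfin
  exact hfin.congr (fun n => (hratio n).symm)
end

section
/- Let (X_n) be an ergodic Markov chain on a finite state space E with stationary distribution Π. Let g : E → ℝ, S_n(g) = Σ_{j=1}^n g(X_j), and suppose the asymptotic variance σ_g² = 0. Then almost surely lim_{n→∞} (1/√n)[S_n(g) − E_Π(S_n(g))] = 0. -/
open Filter

namespace MCDeg

variable {E : Type*} [Fintype E] [DecidableEq E]

lemma pow_nonneg' (P : Matrix E E ℝ) (hP : ∀ i j, 0 ≤ P i j) (n : ℕ) :
    ∀ i j, 0 ≤ (P ^ n) i j := by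
  induction n with
  | zero => intro i j; by_cases h : i = j <;> simp [Matrix.one_apply, h]
  | succ n ih =>
    intro i j
    rw [pow_succ, Matrix.mul_apply]
    exact Finset.sum_nonneg fun k _ => mul_nonneg (ih i k) (hP k j)

lemma pow_rowsum (P : Matrix E E ℝ) (hP : ∀ i, ∑ j, P i j = 1) (n : ℕ) :
    ∀ i, ∑ j, (P ^ n) i j = 1 := by
  induction n with
  | zero => intro i; simp [Matrix.one_apply]
  | succ n ih =>
    intro i
    simp only [pow_succ, Matrix.mul_apply]
    rw [Finset.sum_comm]
    calc ∑ k, ∑ j, (P ^ n) i k * P k j = ∑ k, (P ^ n) i k * ∑ j, P k j := by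
            simp [Finset.mul_sum]
      _ = 1 := by simp [hP, ih]

lemma pow_stat (P : Matrix E E ℝ) (Pi : E → ℝ) (hPi : ∀ j, ∑ i, Pi i * P i j = Pi j) (n : ℕ) :
    ∀ j, ∑ i, Pi i * (P ^ n) i j = Pi j := by
  induction n with
  | zero => intro j; simp [Matrix.one_apply]
  | succ n ih =>
    intro j
    simp only [pow_succ, Matrix.mul_apply, Finset.mul_sum]
    rw [Finset.sum_comm]
    calc ∑ k, ∑ i, Pi i * ((P ^ n) i k * P k j)
        = ∑ k, (∑ i, Pi i * (P ^ n) i k) * P k j := by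
          congr 1; ext k; rw [Finset.sum_mul]; congr 1; ext i; ring
      _ = Pi j := by simp only [ih]; exact hPi j

lemma summable_pow_div (c : ℝ) (h0 : 0 ≤ c) (h1 : c < 1) (n0 : ℕ) (hn : 1 ≤ n0) :
    Summable fun m : ℕ => c ^ (m / n0) := by
  rcases eq_or_lt_of_le h0 with hc | hc
  · apply summable_of_ne_finset_zero (s := Finset.range n0)
    intro m hm
    rw [Finset.mem_range, not_lt] at hm
    have : m / n0 ≠ 0 := by
      have := Nat.one_le_div_iff (by omega) |>.2 hm
      omega
    rw [← hc, zero_pow this]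
  · set r : ℝ := c ^ ((1 : ℝ) / n0) with hr
    have hn0R : (0 : ℝ) < n0 := by positivity
    have hrpos : 0 < r := Real.rpow_pos_of_pos hc _
    have hrlt : r < 1 := Real.rpow_lt_one h0 h1 (by positivity)
    have hbound : ∀ m : ℕ, c ^ (m / n0) ≤ c⁻¹ * r ^ m := by
      intro m
      have hcast : ((m : ℝ) / n0 - 1) ≤ ((m / n0 : ℕ) : ℝ) := by
        have hlt : (m : ℝ) < ((m / n0 : ℕ) + 1) * n0 := by
          have := (Nat.div_lt_iff_lt_mul (by omega : 0 < n0)).1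
            (Nat.lt_succ_self (m / n0))
          exact_mod_cast this
        rw [sub_le_iff_le_add, div_le_iff₀ hn0R]
        linarith [hlt]
      have h1' : c ^ ((m / n0 : ℕ) : ℝ) ≤ c ^ ((m : ℝ) / n0 - 1) :=
        Real.rpow_le_rpow_of_exponent_ge hc h1.le hcast
      rw [Real.rpow_natCast] at h1'
      refine h1'.trans (le_of_eq ?_)
      rw [Real.rpow_sub hc, Real.rpow_one, div_eq_inv_mul]
      congr 1
      rw [hr, ← Real.rpow_natCast (c ^ ((1:ℝ)/n0)) m, ← Real.rpow_mul h0]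
      congr 1
      ring
    refine Summable.of_nonneg_of_le (fun m => pow_nonneg h0 _) hbound ?_
    exact (summable_geometric_of_lt_one hrpos.le hrlt).mul_left _

lemma decay [Nonempty E] (P : Matrix E E ℝ) (hP0 : ∀ i j, 0 ≤ P i j)
    (hP1 : ∀ i, ∑ j, P i j = 1) (n0 : ℕ) (hn0 : 1 ≤ n0)
    (hpos : ∀ i j, 0 < (P ^ n0) i j)
    (Pi : E → ℝ) (hPi0 : ∀ i, 0 ≤ Pi i) (hPi1 : ∑ i, Pi i = 1)
    (hPis : ∀ j, ∑ i, Pi i * P i j = Pi j)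
    (f : E → ℝ) (hf : ∑ i, Pi i * f i = 0) :
    ∃ C c : ℝ, 0 ≤ C ∧ 0 ≤ c ∧ c < 1 ∧
      ∀ (m : ℕ) (i : E), |((P ^ m).mulVec f) i| ≤ C * c ^ (m / n0) := by
  have hne : (Finset.univ : Finset E).Nonempty := Finset.univ_nonempty
  have hneP : (Finset.univ : Finset (E × E)).Nonempty := Finset.univ_nonempty
  set Mx : (E → ℝ) → ℝ := fun v => Finset.univ.sup' hne v with hMx
  set mn : (E → ℝ) → ℝ := fun v => Finset.univ.inf' hne v with hmn
  set δ : ℝ := Finset.univ.inf' hneP (fun p : E × E => (P ^ n0) p.1 p.2) with hδ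
  have hδpos : 0 < δ := by
    rw [hδ, Finset.lt_inf'_iff]
    exact fun p _ => hpos p.1 p.2
  have hδle : ∀ i j, δ ≤ (P ^ n0) i j := fun i j =>
    Finset.inf'_le _ (Finset.mem_univ (i, j))
  set N : ℕ := Fintype.card E with hN
  set c : ℝ := 1 - N * δ with hc
  have hNδ : (N : ℝ) * δ ≤ 1 := by
    obtain ⟨i0⟩ := ‹Nonempty E›
    calc (N : ℝ) * δ = ∑ _j : E, δ := by
          simp [Finset.sum_const, hN, Finset.card_univ, nsmul_eq_mul]
      _ ≤ ∑ j, (P ^ n0) i0 j := Finset.sum_le_sum fun j _ => hδle i0 j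
      _ = 1 := pow_rowsum P hP1 n0 i0
  have hc0 : 0 ≤ c := by rw [hc]; linarith
  have hc1 : c < 1 := by
    have : (0 : ℝ) < N * δ := by
      have : 0 < N := Fintype.card_pos
      positivity
    rw [hc]; linarith
  -- basic bounds
  have hmem : ∀ (v : E → ℝ) i, mn v ≤ v i ∧ v i ≤ Mx v := fun v i =>
    ⟨Finset.inf'_le _ (Finset.mem_univ i), Finset.le_sup' _ (Finset.mem_univ i)⟩
  have hmono : ∀ (Q : Matrix E E ℝ), (∀ i j, 0 ≤ Q i j) → (∀ i, ∑ j, Q i j = 1) →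
      ∀ (v : E → ℝ) i, mn v ≤ Q.mulVec v i ∧ Q.mulVec v i ≤ Mx v := by
    intro Q hQ0 hQ1 v i
    have hv : Q.mulVec v i = ∑ j, Q i j * v j := by
      simp [Matrix.mulVec, dotProduct]
    constructor
    · rw [hv]
      calc mn v = ∑ j, Q i j * mn v := by
            rw [← Finset.sum_mul, hQ1, one_mul]
        _ ≤ ∑ j, Q i j * v j :=
            Finset.sum_le_sum fun j _ =>
              mul_le_mul_of_nonneg_left (hmem v j).1 (hQ0 i j)
    · rw [hv]
      calc ∑ j, Q i j * v j ≤ ∑ j, Q i j * Mx v :=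
            Finset.sum_le_sum fun j _ =>
              mul_le_mul_of_nonneg_left (hmem v j).2 (hQ0 i j)
        _ = Mx v := by rw [← Finset.sum_mul, hQ1, one_mul]
  -- contraction for P^n0
  have hcontr : ∀ (v : E → ℝ),
      Mx ((P ^ n0).mulVec v) - mn ((P ^ n0).mulVec v) ≤ c * (Mx v - mn v) := by
    intro v
    obtain ⟨i, _, hi⟩ := Finset.exists_mem_eq_sup' hne ((P ^ n0).mulVec v)
    obtain ⟨j, _, hj⟩ := Finset.exists_mem_eq_inf' hne ((P ^ n0).mulVec v)
    have hi' : Mx ((P ^ n0).mulVec v) = (P ^ n0).mulVec v i := hi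
    have hj' : mn ((P ^ n0).mulVec v) = (P ^ n0).mulVec v j := hj
    rw [hi', hj']
    have hrow : ∀ k : E, ∑ l, ((P ^ n0) k l - δ) = c := by
      intro k
      rw [Finset.sum_sub_distrib, pow_rowsum P hP1 n0 k]
      simp [hc, hN, Finset.sum_const, Finset.card_univ, nsmul_eq_mul]
    have hsplit : ∀ k : E, (P ^ n0).mulVec v k
        = ∑ l, ((P ^ n0) k l - δ) * v l + δ * ∑ l, v l := by
      intro k
      simp only [Matrix.mulVec, dotProduct]
      rw [Finset.mul_sum, ← Finset.sum_add_distrib]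
      congr 1; ext l; ring
    rw [hsplit i, hsplit j]
    have h1 : ∑ l, ((P ^ n0) i l - δ) * v l ≤ c * Mx v := by
      rw [← hrow i, Finset.sum_mul]
      exact Finset.sum_le_sum fun l _ =>
        mul_le_mul_of_nonneg_left (hmem v l).2 (by linarith [hδle i l])
    have h2 : c * mn v ≤ ∑ l, ((P ^ n0) j l - δ) * v l := by
      rw [← hrow j, Finset.sum_mul]
      exact Finset.sum_le_sum fun l _ =>
        mul_le_mul_of_nonneg_left (hmem v l).1 (by linarith [hδle j l])
    rw [mul_sub]
    linarith
  -- centered functions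
  have hcent_pow : ∀ m : ℕ, ∑ i, Pi i * ((P ^ m).mulVec f) i = 0 := by
    intro m
    simp only [Matrix.mulVec, dotProduct, Finset.mul_sum]
    rw [Finset.sum_comm]
    calc ∑ j, ∑ i, Pi i * ((P ^ m) i j * f j)
        = ∑ j, (∑ i, Pi i * (P ^ m) i j) * f j := by
          congr 1; ext j; rw [Finset.sum_mul]; congr 1; ext i; ring
      _ = ∑ j, Pi j * f j := by simp only [pow_stat P Pi hPis]
      _ = 0 := hf
  have hcenter : ∀ (v : E → ℝ), (∑ i, Pi i * v i = 0) →
      ∀ i, |v i| ≤ Mx v - mn v := by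
    intro v hv i
    have hmn0 : mn v ≤ 0 := by
      calc mn v = ∑ i, Pi i * mn v := by rw [← Finset.sum_mul, hPi1, one_mul]
        _ ≤ ∑ i, Pi i * v i :=
            Finset.sum_le_sum fun i _ =>
              mul_le_mul_of_nonneg_left (hmem v i).1 (hPi0 i)
        _ = 0 := hv
    have hMx0 : 0 ≤ Mx v := by
      calc (0:ℝ) = ∑ i, Pi i * v i := hv.symm
        _ ≤ ∑ i, Pi i * Mx v :=
            Finset.sum_le_sum fun i _ =>
              mul_le_mul_of_nonneg_left (hmem v i).2 (hPi0 i)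
        _ = Mx v := by rw [← Finset.sum_mul, hPi1, one_mul]
    rw [abs_le]
    constructor
    · linarith [(hmem v i).1]
    · linarith [(hmem v i).2]
  -- iterated contraction
  have hosc : ∀ q : ℕ, Mx (((P ^ n0) ^ q).mulVec f) - mn (((P ^ n0) ^ q).mulVec f)
      ≤ c ^ q * (Mx f - mn f) := by
    intro q
    induction q with
    | zero => simp [Matrix.one_mulVec]
    | succ q ih =>
      have heq : ((P ^ n0) ^ (q + 1)).mulVec f
          = (P ^ n0).mulVec (((P ^ n0) ^ q).mulVec f) := by
        rw [Matrix.mulVec_mulVec, ← pow_succ']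
      rw [heq]
      calc Mx ((P ^ n0).mulVec (((P ^ n0) ^ q).mulVec f))
            - mn ((P ^ n0).mulVec (((P ^ n0) ^ q).mulVec f))
          ≤ c * (Mx (((P ^ n0) ^ q).mulVec f) - mn (((P ^ n0) ^ q).mulVec f)) :=
            hcontr _
        _ ≤ c * (c ^ q * (Mx f - mn f)) := mul_le_mul_of_nonneg_left ih hc0
        _ = c ^ (q + 1) * (Mx f - mn f) := by ring
  refine ⟨Mx f - mn f, c, ?_, hc0, hc1, ?_⟩
  · obtain ⟨i0⟩ := ‹Nonempty E›
    linarith [(hmem f i0).1, (hmem f i0).2]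
  · intro m i
    set q := m / n0 with hq
    set s := m % n0 with hs
    have hm : m = s + n0 * q := (Nat.mod_add_div m n0).symm
    have hPm : (P ^ m).mulVec f = (P ^ s).mulVec (((P ^ n0) ^ q).mulVec f) := by
      rw [Matrix.mulVec_mulVec, ← pow_mul, ← pow_add, ← hm]
    have hsto0 := pow_nonneg' P hP0 s
    have hsto1 := pow_rowsum P hP1 s
    set F := ((P ^ n0) ^ q).mulVec f with hF
    have hGb : ∀ i', mn F ≤ ((P ^ s).mulVec F) i' ∧ ((P ^ s).mulVec F) i' ≤ Mx F :=
      fun i' => hmono _ hsto0 hsto1 F i'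
    have hcc : ∀ i', |((P ^ m).mulVec f) i'| ≤ Mx ((P ^ m).mulVec f) - mn ((P ^ m).mulVec f) :=
      hcenter _ (hcent_pow m)
    calc |((P ^ m).mulVec f) i| ≤ Mx ((P ^ m).mulVec f) - mn ((P ^ m).mulVec f) := hcc i
      _ ≤ Mx F - mn F := by
          rw [hPm]
          have h1 : Mx ((P ^ s).mulVec F) ≤ Mx F :=
            Finset.sup'_le _ _ fun i' _ => (hGb i').2
          have h2 : mn F ≤ mn ((P ^ s).mulVec F) :=
            Finset.le_inf' _ _ fun i' _ => (hGb i').1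
          linarith
      _ ≤ c ^ q * (Mx f - mn f) := hosc q
      _ = (Mx f - mn f) * c ^ (m / n0) := by rw [hq]; ring

end MCDeg

open MeasureTheory Filter

/-- For an ergodic (irreducible aperiodic) finite-state Markov chain started from its
stationary distribution `Π`, with `S_n(g) = ∑_{j<n} g(X_j)` and vanishing asymptotic
variance `σ_g² = 0`, almost surely `(1/√n)[S_n(g) − E_Π(S_n(g))] → 0`. -/
theorem markov_clt_degenerate {Ω : Type*} [MeasurableSpace Ω] (μ : Measure Ω)
    [IsProbabilityMeasure μ] {E : Type*} [Fintype E] [DecidableEq E]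
    (X : ℕ → Ω → E) (P : Matrix E E ℝ) (Pi : E → ℝ) (g : E → ℝ)
    (hP_nonneg : ∀ i j, 0 ≤ P i j) (hP_sum : ∀ i, ∑ j, P i j = 1)
    (hP_erg : ∃ n : ℕ, 1 ≤ n ∧ ∀ i j, 0 < (P ^ n) i j)
    (hPi_nonneg : ∀ i, 0 ≤ Pi i) (hPi_sum : ∑ i, Pi i = 1)
    (hPi_stat : ∀ j, ∑ i, Pi i * P i j = Pi j)
    (hμ : ∀ (n : ℕ) (x : Fin (n + 1) → E),
      (μ {ω | ∀ k : Fin (n + 1), X k.val ω = x k}).toReal =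
        Pi (x 0) * ∏ k : Fin n, P (x k.castSucc) (x k.succ))
    (hσ : Tendsto
      (fun N : ℕ =>
        (∑ i, Pi i * (g i - ∑ a, Pi a * g a) ^ 2) +
          2 * ∑ m ∈ Finset.range N, ∑ i, ∑ i',
            Pi i * (g i - ∑ a, Pi a * g a) * (P ^ (m + 1)) i i' * (g i' - ∑ a, Pi a * g a))
      atTop (nhds 0)) :
    ∀ᵐ ω ∂μ, Tendsto
      (fun n : ℕ =>
        ((∑ j ∈ Finset.range n, g (X j ω)) - n * ∑ a, Pi a * g a) / Real.sqrt n)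
      atTop (nhds 0) := by
  classical
  obtain ⟨n0, hn0, hpos⟩ := hP_erg
  have hE : Nonempty E := by
    by_contra hcon
    rw [not_nonempty_iff] at hcon
    rw [Finset.univ_eq_empty, Finset.sum_empty] at hPi_sum
    exact absurd hPi_sum (by norm_num)
  have hne : (Finset.univ : Finset E).Nonempty := Finset.univ_nonempty
  set m0 : ℝ := ∑ a, Pi a * g a with hm0
  set gbar : E → ℝ := fun i => g i - m0 with hgbar
  have hgbar0 : ∑ i, Pi i * gbar i = 0 := by
    have h1 : ∑ i, Pi i * gbar i = (∑ i, Pi i * g i) - (∑ i, Pi i) * m0 := by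
      rw [Finset.sum_mul, ← Finset.sum_sub_distrib]
      exact Finset.sum_congr rfl fun i _ => by rw [hgbar]; ring
    rw [h1, hPi_sum, one_mul, ← hm0, sub_self]
  obtain ⟨C, c, hC0, hc0, hc1, hbound⟩ :=
    MCDeg.decay P hP_nonneg hP_sum n0 hn0 hpos Pi hPi_nonneg hPi_sum hPi_stat gbar hgbar0
  obtain ⟨av, hav⟩ : ∃ f : ℕ → E → ℝ, f = fun m => (P ^ m).mulVec gbar := ⟨_, rfl⟩
  have hsum : ∀ i, Summable fun m => av m i := by
    intro i
    refine Summable.of_norm_bounded (g := fun m => C * c ^ (m / n0))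
      ((MCDeg.summable_pow_div c hc0 hc1 n0 hn0).mul_left C) ?_
    intro m
    rw [Real.norm_eq_abs, hav]
    exact hbound m i
  obtain ⟨hf, hhf⟩ : ∃ f : E → ℝ, f = fun i => ∑' m, av m i := ⟨_, rfl⟩
  have hfi : ∀ i, hf i = ∑' m, av m i := fun i => by rw [hhf]
  have ha0 : ∀ i, av 0 i = gbar i := by
    intro i
    simp only [hav, pow_zero, Matrix.one_mulVec]
  have hshift : ∀ i, Summable fun m => av (m + 1) i :=
    fun i => (summable_nat_add_iff 1).2 (hsum i)
  have htail : ∀ i, ∑' m, av (m + 1) i = hf i - gbar i := by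
    intro i
    have h1 := (hsum i).tsum_eq_zero_add
    rw [ha0, ← hfi i] at h1
    linarith
  have hPh : ∀ i, P.mulVec hf i = hf i - gbar i := by
    intro i
    calc P.mulVec hf i = ∑ j, P i j * ∑' m, av m j := by
          simp only [Matrix.mulVec, dotProduct]
          exact Finset.sum_congr rfl fun j _ => by rw [hfi j]
      _ = ∑ j, ∑' m, P i j * av m j :=
          Finset.sum_congr rfl fun j _ => tsum_mul_left.symm
      _ = ∑' m, ∑ j, P i j * av m j :=
          (Summable.tsum_finsetSum fun j _ => (hsum j).mul_left _).symm
      _ = ∑' m, av (m + 1) i := by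
          refine tsum_congr fun m => ?_
          have e1 : av (m + 1) = P.mulVec (av m) := by
            simp only [hav]
            rw [Matrix.mulVec_mulVec, ← pow_succ']
          rw [e1]
          simp only [Matrix.mulVec, dotProduct]
      _ = hf i - gbar i := htail i
  have hTi : ∀ i, Tendsto (fun N => ∑ m ∈ Finset.range N, av (m + 1) i)
      atTop (nhds (hf i - gbar i)) := by
    intro i
    have := (hshift i).hasSum.tendsto_sum_nat
    rwa [htail i] at this
  have hσ' : Tendsto (fun N : ℕ => (∑ i, Pi i * gbar i ^ 2)
      + 2 * ∑ i, (Pi i * gbar i) * (∑ m ∈ Finset.range N, av (m + 1) i))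
      atTop (nhds ((∑ i, Pi i * gbar i ^ 2)
        + 2 * ∑ i, (Pi i * gbar i) * (hf i - gbar i))) :=
    ((tendsto_finset_sum _ fun i _ => (hTi i).const_mul _).const_mul 2).const_add _
  have hL0 : (∑ i, Pi i * gbar i ^ 2)
      + 2 * ∑ i, (Pi i * gbar i) * (hf i - gbar i) = 0 := by
    have hσ2 : Tendsto (fun N : ℕ => (∑ i, Pi i * gbar i ^ 2) +
        2 * ∑ m ∈ Finset.range N, ∑ i, ∑ i',
          Pi i * gbar i * (P ^ (m + 1)) i i' * gbar i') atTop (nhds 0) := hσ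
    have hrw : (fun N : ℕ => (∑ i, Pi i * gbar i ^ 2) +
          2 * ∑ m ∈ Finset.range N, ∑ i, ∑ i',
            Pi i * gbar i * (P ^ (m + 1)) i i' * gbar i')
        = (fun N : ℕ => (∑ i, Pi i * gbar i ^ 2)
          + 2 * ∑ i, (Pi i * gbar i) * (∑ m ∈ Finset.range N, av (m + 1) i)) := by
      funext N
      congr 1
      congr 1
      rw [Finset.sum_comm]
      refine Finset.sum_congr rfl fun i _ => ?_
      rw [Finset.mul_sum]
      refine Finset.sum_congr rfl fun m _ => ?_
      have e2 : av (m + 1) i = ∑ i', (P ^ (m + 1)) i i' * gbar i' := by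
        simp only [hav]
        simp [Matrix.mulVec, dotProduct]
      rw [e2, Finset.mul_sum]
      exact Finset.sum_congr rfl fun i' _ => by ring
    rw [hrw] at hσ2
    exact tendsto_nhds_unique hσ' hσ2
  have hQ : ∑ i, ∑ j, Pi i * (P i j * (hf j - (hf i - gbar i)) ^ 2) = 0 := by
    have inner : ∀ i, ∑ j, Pi i * (P i j * (hf j - (hf i - gbar i)) ^ 2)
        = (∑ j, Pi i * P i j * hf j ^ 2) - Pi i * (hf i - gbar i) ^ 2 := by
      intro i
      have e3 : ∀ j, Pi i * (P i j * (hf j - (hf i - gbar i)) ^ 2)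
          = Pi i * P i j * hf j ^ 2
            - 2 * ((Pi i * (hf i - gbar i)) * (P i j * hf j))
            + (Pi i * (hf i - gbar i) ^ 2) * P i j := fun j => by ring
      simp_rw [e3]
      rw [Finset.sum_add_distrib, Finset.sum_sub_distrib, ← Finset.mul_sum,
        ← Finset.mul_sum, ← Finset.mul_sum, hP_sum i, mul_one]
      have e4 : ∑ j, P i j * hf j = hf i - gbar i := by
        have e5 : ∑ j, P i j * hf j = P.mulVec hf i := by
          simp [Matrix.mulVec, dotProduct]
        rw [e5, hPh i]
      rw [e4]
      ring
    have t1 : ∑ i, ∑ j, Pi i * P i j * hf j ^ 2 = ∑ j, Pi j * hf j ^ 2 := by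
      rw [Finset.sum_comm]
      refine Finset.sum_congr rfl fun j _ => ?_
      rw [← Finset.sum_mul, hPi_stat j]
    calc ∑ i, ∑ j, Pi i * (P i j * (hf j - (hf i - gbar i)) ^ 2)
        = ∑ i, ((∑ j, Pi i * P i j * hf j ^ 2) - Pi i * (hf i - gbar i) ^ 2) :=
          Finset.sum_congr rfl fun i _ => inner i
      _ = (∑ i, ∑ j, Pi i * P i j * hf j ^ 2) - ∑ i, Pi i * (hf i - gbar i) ^ 2 :=
          Finset.sum_sub_distrib _ _
      _ = (∑ i, Pi i * hf i ^ 2) - ∑ i, Pi i * (hf i - gbar i) ^ 2 := by rw [t1]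
      _ = (∑ i, Pi i * gbar i ^ 2)
          + 2 * ∑ i, (Pi i * gbar i) * (hf i - gbar i) := by
          rw [Finset.mul_sum, ← Finset.sum_add_distrib, ← Finset.sum_sub_distrib]
          exact Finset.sum_congr rfl fun i _ => by ring
      _ = 0 := hL0
  have hzero : ∀ i j, 0 < Pi i → 0 < P i j → hf j = hf i - gbar i := by
    intro i j hi hj
    have houter : ∀ i ∈ (Finset.univ : Finset E),
        (0:ℝ) ≤ ∑ j, Pi i * (P i j * (hf j - (hf i - gbar i)) ^ 2) :=
      fun i _ => Finset.sum_nonneg fun j _ =>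
        mul_nonneg (hPi_nonneg i) (mul_nonneg (hP_nonneg i j) (sq_nonneg _))
    have h1 := (Finset.sum_eq_zero_iff_of_nonneg houter).1 hQ i (Finset.mem_univ i)
    have hinner : ∀ j ∈ (Finset.univ : Finset E),
        (0:ℝ) ≤ Pi i * (P i j * (hf j - (hf i - gbar i)) ^ 2) :=
      fun j _ => mul_nonneg (hPi_nonneg i) (mul_nonneg (hP_nonneg i j) (sq_nonneg _))
    have h2 := (Finset.sum_eq_zero_iff_of_nonneg hinner).1 h1 j (Finset.mem_univ j)
    have h4 : (hf j - (hf i - gbar i)) ^ 2 = 0 := by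
      rcases mul_eq_zero.1 h2 with h3 | h3
      · exact absurd h3 (ne_of_gt hi)
      rcases mul_eq_zero.1 h3 with h5 | h5
      · exact absurd h5 (ne_of_gt hj)
      · exact h5
    have h6 : hf j - (hf i - gbar i) = 0 := by
      have := sq_eq_zero_iff.1 h4
      exact this
    linarith
  -- probability part
  have hcyl : ∀ (k : ℕ) (x : Fin (k + 2) → E),
      Pi (x ⟨k, by omega⟩) * P (x ⟨k, by omega⟩) (x ⟨k + 1, by omega⟩) = 0 →
      μ {ω | ∀ j : Fin (k + 2), X j.val ω = x j} = 0 := by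
    intro k x hbad
    have hprod : Pi (x 0) * ∏ j : Fin (k + 1), P (x j.castSucc) (x j.succ) = 0 := by
      by_contra hcon
      rcases mul_ne_zero_iff.1 hcon with ⟨hA, hB⟩
      have hfac : ∀ j : Fin (k + 1), P (x j.castSucc) (x j.succ) ≠ 0 := by
        intro j
        exact Finset.prod_ne_zero_iff.1 hB j (Finset.mem_univ j)
      have hsteps : ∀ j : Fin (k + 1), 0 < P (x j.castSucc) (x j.succ) :=
        fun j => lt_of_le_of_ne (hP_nonneg _ _) (Ne.symm (hfac j))
      have hPipos : ∀ j : Fin (k + 2), 0 < Pi (x j) := by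
        intro j
        induction j using Fin.induction with
        | zero => exact lt_of_le_of_ne (hPi_nonneg _) (Ne.symm hA)
        | succ i ih =>
          have hle : Pi (x i.castSucc) * P (x i.castSucc) (x i.succ) ≤ Pi (x i.succ) := by
            rw [← hPi_stat (x i.succ)]
            exact Finset.single_le_sum (f := fun l => Pi l * P l (x i.succ))
              (fun l _ => mul_nonneg (hPi_nonneg l) (hP_nonneg l _)) (Finset.mem_univ _)
          exact lt_of_lt_of_le (mul_pos ih (hsteps i)) hle
      have hApos : 0 < Pi (x ⟨k, by omega⟩) := hPipos ⟨k, by omega⟩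
      have hBpos : 0 < P (x ⟨k, by omega⟩) (x ⟨k + 1, by omega⟩) := hsteps ⟨k, by omega⟩
      exact (mul_pos hApos hBpos).ne' hbad
    have htr := hμ (k + 1) x
    rw [hprod] at htr
    rcases (ENNReal.toReal_eq_zero_iff _).1 htr with h0 | h0
    · exact h0
    · exact absurd h0 (measure_ne_top μ _)
  have hAk : ∀ k : ℕ,
      μ {ω | ¬(0 < Pi (X k ω) ∧ 0 < P (X k ω) (X (k + 1) ω))} = 0 := by
    intro k
    have hsub : {ω | ¬(0 < Pi (X k ω) ∧ 0 < P (X k ω) (X (k + 1) ω))}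
        ⊆ ⋃ x : {x : Fin (k + 2) → E //
            Pi (x ⟨k, by omega⟩) * P (x ⟨k, by omega⟩) (x ⟨k + 1, by omega⟩) = 0},
          {ω | ∀ j : Fin (k + 2), X j.val ω = x.val j} := by
      intro ω hω
      have hx : Pi (X k ω) * P (X k ω) (X (k + 1) ω) = 0 := by
        by_contra hcon
        rcases mul_ne_zero_iff.1 hcon with ⟨hA, hB⟩
        exact hω ⟨lt_of_le_of_ne (hPi_nonneg _) (Ne.symm hA),
          lt_of_le_of_ne (hP_nonneg _ _) (Ne.symm hB)⟩
      exact Set.mem_iUnion.2 ⟨⟨fun j => X j.val ω, hx⟩, fun j => rfl⟩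
    exact measure_mono_null hsub (measure_iUnion_null fun x => hcyl k x.val x.prop)
  have hGood : ∀ᵐ ω ∂μ, ∀ k : ℕ, 0 < Pi (X k ω) ∧ 0 < P (X k ω) (X (k + 1) ω) := by
    rw [ae_iff]
    refine measure_mono_null ?_ (measure_iUnion_null hAk)
    intro ω hω
    rw [Set.mem_setOf_eq, not_forall] at hω
    obtain ⟨k, hk⟩ := hω
    exact Set.mem_iUnion.2 ⟨k, hk⟩
  filter_upwards [hGood] with ω hω
  have key : ∀ n : ℕ, (∑ j ∈ Finset.range n, g (X j ω)) - n * m0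
      = hf (X 0 ω) - hf (X n ω) := by
    intro n
    induction n with
    | zero => simp
    | succ n ih =>
      rw [Finset.sum_range_succ]
      have hrel : hf (X (n + 1) ω) = hf (X n ω) - gbar (X n ω) :=
        hzero _ _ (hω n).1 (hω n).2
      have hgb : gbar (X n ω) = g (X n ω) - m0 := rfl
      rw [hrel, hgb]
      push_cast
      linarith
  set B : ℝ := 2 * Finset.univ.sup' hne (fun i => |hf i|) with hB
  have hBd : ∀ n : ℕ, ‖((∑ j ∈ Finset.range n, g (X j ω)) - n * m0) / Real.sqrt n‖
      ≤ B / Real.sqrt n := by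
    intro n
    rw [key n, Real.norm_eq_abs, abs_div, abs_of_nonneg (Real.sqrt_nonneg _),
      div_eq_mul_inv, div_eq_mul_inv]
    refine mul_le_mul_of_nonneg_right ?_ (inv_nonneg.2 (Real.sqrt_nonneg _))
    have h1 : |hf (X 0 ω)| ≤ Finset.univ.sup' hne (fun i => |hf i|) :=
      Finset.le_sup' (fun i => |hf i|) (Finset.mem_univ (X 0 ω))
    have h2 : |hf (X n ω)| ≤ Finset.univ.sup' hne (fun i => |hf i|) :=
      Finset.le_sup' (fun i => |hf i|) (Finset.mem_univ (X n ω))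
    calc |hf (X 0 ω) - hf (X n ω)| ≤ |hf (X 0 ω)| + |hf (X n ω)| := abs_sub _ _
      _ ≤ B := by rw [hB]; linarith
  refine squeeze_zero_norm hBd ?_
  refine Tendsto.div_atTop tendsto_const_nhds ?_
  have h1 : Tendsto Real.sqrt atTop atTop := by
    rw [tendsto_atTop_atTop]
    intro b
    exact ⟨b ^ 2, fun x hx => by
      calc b ≤ Real.sqrt (b ^ 2) := by
            rcases le_or_gt 0 b with hb | hb
            · rw [Real.sqrt_sq hb]
            · exact hb.le.trans (Real.sqrt_nonneg _)
        _ ≤ Real.sqrt x := Real.sqrt_le_sqrt hx⟩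
  exact h1.comp tendsto_natCast_atTop_atTop
end
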